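/- Suppose the groups G_1, …, G_M are pairwise disjoint and each contains at least k2 elements. Let z ∈ ℝ^p. For each j ∈ {1, …, M} let T_j ⊆ G_j with |T_j| = k2 and |z_a| ≥ |z_b| for all a ∈ T_j, b ∈ G_j \ T_j (the top-k2 entries of group j). Let G ⊆ {1, …, M} with |G| = k1 satisfy ‖z_{T_i}‖ ≥ ‖z_{T_j}‖ for all i ∈ G and j ∉ G (the k1 groups with largest top-k2 energy, as selected by Algorithm 3 of the paper), and set S = ∪_{i∈G} T_i. Let w* ∈ ℝ^p with S* = supp(w*), and suppose there is G* ⊆ {1, …, M} with |G*| ≤ k1* ≤ k1 such that S* ⊆ ∪_{j∈G*} G_j and |S* ∩ G_j| ≤ k2* ≤ k2 for every j. Then ‖z_{S*\S}‖² ≤ max(k1*/k1, k2*/k2) · ‖z_{S\S*}‖². -/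

import Mathlib

open Finset

noncomputable section

/-- The restriction of a vector to a coordinate set: agrees with `z` on `S`, zero off `S`. -/
def restrict {p : ℕ} (z : EuclideanSpace ℝ (Fin p)) (S : Finset (Fin p)) :
    EuclideanSpace ℝ (Fin p) :=
  WithLp.toLp 2 (fun i => if i ∈ S then z i else 0)

open Classical in
/-- The support of a vector, as a finite set. -/
noncomputable def suppF {p : ℕ} (z : EuclideanSpace ℝ (Fin p)) : Finset (Fin p) :=
  Finset.univ.filter (fun i => z i ≠ 0)

/-- `w` is `k`-group-sparse w.r.t. the groups `G`. -/
def GroupSparse {p M : ℕ} (G : Fin M → Finset (Fin p)) (k : ℕ)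
    (w : EuclideanSpace ℝ (Fin p)) : Prop :=
  ∃ A : Finset (Fin M), A.card ≤ k ∧ suppF w ⊆ A.biUnion G

/-- `B_j`: the union of the first `j` selected groups. -/
def partialUnion {p M m : ℕ} (G : Fin M → Finset (Fin p)) (idx : Fin m → Fin M) (j : ℕ) :
    Finset (Fin p) :=
  (Finset.univ.filter (fun t : Fin m => (t : ℕ) < j)).biUnion (fun t => G (idx t))

/-- `idx` is a greedy selection for `z` (Algorithm 2 of the paper): at each step `j`,
the selected group maximizes the norm of `z` restricted to the yet-uncovered part. -/
def IsGreedySelection {p M m : ℕ} (G : Fin M → Finset (Fin p))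
    (z : EuclideanSpace ℝ (Fin p)) (idx : Fin m → Fin M) : Prop :=
  ∀ j : Fin m, ∀ ℓ : Fin M,
    ‖restrict z (G ℓ \ partialUnion G idx (j : ℕ))‖ ≤
      ‖restrict z (G (idx j) \ partialUnion G idx (j : ℕ))‖

/-- `w` is an exact projection of `z` onto `k`-group-sparse vectors. -/
def IsExactProj {p M : ℕ} (G : Fin M → Finset (Fin p)) (k : ℕ)
    (z w : EuclideanSpace ℝ (Fin p)) : Prop :=
  GroupSparse G k w ∧ ∀ w', GroupSparse G k w' → ‖w - z‖ ≤ ‖w' - z‖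

/-- `f` satisfies restricted strong convexity / smoothness of order `k'`
with constants `α ≤ L`. -/
def RSCRSS {p M : ℕ} (G : Fin M → Finset (Fin p)) (k' : ℕ) (α L : ℝ)
    (f : EuclideanSpace ℝ (Fin p) → ℝ) : Prop :=
  ContDiff ℝ 2 f ∧
  ∀ w : EuclideanSpace ℝ (Fin p), GroupSparse G k' w →
    ∀ v : EuclideanSpace ℝ (Fin p),
      α * ‖v‖ ^ 2 ≤ iteratedFDeriv ℝ 2 f w ![v, v] ∧
      iteratedFDeriv ℝ 2 f w ![v, v] ≤ L * ‖v‖ ^ 2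

private lemma card_arith (a b t k ks : ℕ) (h1 : a + t ≤ ks) (h2 : b + t = k) (h3 : ks ≤ k) :
    k * a ≤ ks * b := by nlinarith

private lemma key_sum {ι : Type*} (A B : Finset ι) (f : ι → ℝ)
    (hfB : ∀ b ∈ B, 0 ≤ f b) (hAB : ∀ a ∈ A, ∀ b ∈ B, f a ≤ f b)
    (n m : ℕ) (hcard : n * A.card ≤ m * B.card) :
    (n : ℝ) * ∑ a ∈ A, f a ≤ (m : ℝ) * ∑ b ∈ B, f b := by
  rcases A.eq_empty_or_nonempty with rfl | hA
  · simp only [Finset.sum_empty, mul_zero]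
    exact mul_nonneg (by positivity) (Finset.sum_nonneg hfB)
  rcases B.eq_empty_or_nonempty with rfl | hB
  · have h0 : n * A.card = 0 := Nat.le_zero.mp (by simpa using hcard)
    have hn : n = 0 := by
      rcases Nat.mul_eq_zero.mp h0 with h | h
      · exact h
      · exact absurd h hA.card_pos.ne'
    subst hn; simp
  obtain ⟨b0, hb0, hmin⟩ := B.exists_min_image f hB
  have h1 : ∑ a ∈ A, f a ≤ A.card * f b0 := by
    calc ∑ a ∈ A, f a ≤ ∑ _a ∈ A, f b0 := Finset.sum_le_sum (fun a ha => hAB a ha b0 hb0)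
      _ = A.card * f b0 := by rw [Finset.sum_const, nsmul_eq_mul]
  have h2 : (B.card : ℝ) * f b0 ≤ ∑ b ∈ B, f b := by
    calc (B.card : ℝ) * f b0 = ∑ _b ∈ B, f b0 := by rw [Finset.sum_const, nsmul_eq_mul]
      _ ≤ ∑ b ∈ B, f b := Finset.sum_le_sum (fun b hb => hmin b hb)
  have hf0 : 0 ≤ f b0 := hfB b0 hb0
  have hc : (n : ℝ) * A.card ≤ (m : ℝ) * B.card := by exact_mod_cast hcard
  calc (n : ℝ) * ∑ a ∈ A, f a ≤ (n : ℝ) * (A.card * f b0) :=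
        mul_le_mul_of_nonneg_left h1 (by positivity)
    _ = ((n : ℝ) * A.card) * f b0 := by ring
    _ ≤ ((m : ℝ) * B.card) * f b0 := mul_le_mul_of_nonneg_right hc hf0
    _ = (m : ℝ) * (B.card * f b0) := by ring
    _ ≤ (m : ℝ) * ∑ b ∈ B, f b := mul_le_mul_of_nonneg_left h2 (by positivity)

private lemma norm_restrict_sq {p : ℕ} (z : EuclideanSpace ℝ (Fin p)) (S : Finset (Fin p)) :
    ‖restrict z S‖ ^ 2 = ∑ i ∈ S, (z i) ^ 2 := by
  have h : ∀ i : Fin p, ‖_root_.restrict z S i‖ ^ 2 = if i ∈ S then (z i) ^ 2 else 0 := by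
    intro i
    show ‖(if i ∈ S then z i else 0 : ℝ)‖ ^ 2 = _
    split <;> simp [sq_abs, Real.norm_eq_abs]
  rw [EuclideanSpace.norm_eq, Real.sq_sqrt (by positivity)]
  simp_rw [h]
  rw [Finset.sum_ite_mem, Finset.univ_inter]


/-- Lemma `sogfinal` of the paper: sparse overlapping groups with disjoint
groups. With `S = ∪_{i∈Gsel} T_i` the output of the greedy SoG selection (Algorithm 3) and
`S* = supp(w*)` covered by at most `k1*` groups with at most `k2*` entries per group,
`‖z_{S*\S}‖² ≤ max(k1*/k1, k2*/k2)·‖z_{S\S*}‖²`. -/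
theorem stmt_14 (p M : ℕ) (hp : 1 ≤ p) (hM : 1 ≤ M)
    (G : Fin M → Finset (Fin p)) (hcov : ∀ i : Fin p, ∃ j : Fin M, i ∈ G j)
    (hdisj : ∀ i j : Fin M, i ≠ j → Disjoint (G i) (G j))
    (k1 k2 k1s k2s : ℕ) (hk1 : k1s ≤ k1) (hk2 : k2s ≤ k2)
    (hsize : ∀ j : Fin M, k2 ≤ (G j).card)
    (z : EuclideanSpace ℝ (Fin p))
    (T : Fin M → Finset (Fin p))
    (hTsub : ∀ j : Fin M, T j ⊆ G j)
    (hTcard : ∀ j : Fin M, (T j).card = k2)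
    (hTtop : ∀ j : Fin M, ∀ a ∈ T j, ∀ b ∈ G j \ T j, |z b| ≤ |z a|)
    (Gsel : Finset (Fin M)) (hGsel : Gsel.card = k1)
    (hsel : ∀ i ∈ Gsel, ∀ j ∉ Gsel, ‖restrict z (T j)‖ ≤ ‖restrict z (T i)‖)
    (wstar : EuclideanSpace ℝ (Fin p))
    (Gstar : Finset (Fin M)) (hGstarcard : Gstar.card ≤ k1s)
    (hGstarcov : suppF wstar ⊆ Gstar.biUnion G)
    (hGstarper : ∀ j : Fin M, (suppF wstar ∩ G j).card ≤ k2s) :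
    ‖restrict z (suppF wstar \ Gsel.biUnion T)‖ ^ 2 ≤
      max ((k1s : ℝ) / (k1 : ℝ)) ((k2s : ℝ) / (k2 : ℝ)) *
        ‖restrict z (Gsel.biUnion T \ suppF wstar)‖ ^ 2 := by
  classical
  rw [norm_restrict_sq, norm_restrict_sq]
  set Ss := suppF wstar with hSsdef
  set SS := Gsel.biUnion T with hSSdef
  by_cases hSe : Ss = ∅
  · rw [hSe]
    simp only [Finset.empty_sdiff, Finset.sum_empty]
    positivity
  have hSne : Ss.Nonempty := Finset.nonempty_iff_ne_empty.mpr hSe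
  have hk2pos : 0 < k2 := by
    by_contra h
    push_neg at h
    obtain ⟨i, hi⟩ := hSne
    obtain ⟨j, hj⟩ := hcov i
    have h1 : 0 < (Ss ∩ G j).card := Finset.card_pos.mpr ⟨i, Finset.mem_inter.mpr ⟨hi, hj⟩⟩
    have h2 := hGstarper j
    omega
  have hk1pos : 0 < k1 := by
    by_contra h
    push_neg at h
    have hGstarE : Gstar = ∅ := Finset.card_eq_zero.mp (by omega)
    obtain ⟨i, hi⟩ := hSne
    have hmem := hGstarcov hi
    rw [hGstarE] at hmem
    simp at hmem
  have hdis : ∀ {x : Fin p} {i j : Fin M}, x ∈ G i → x ∈ G j → i = j := by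
    intro x i j hxi hxj
    by_contra hne
    exact Finset.disjoint_left.mp (hdisj i j hne) hxi hxj
  have hmemSS : ∀ {x : Fin p} {j : Fin M}, x ∈ G j → (x ∈ SS ↔ j ∈ Gsel ∧ x ∈ T j) := by
    intro x j hxj
    constructor
    · intro hx
      obtain ⟨i, hiGsel, hxTi⟩ := Finset.mem_biUnion.mp hx
      have hij : i = j := hdis (hTsub i hxTi) hxj
      subst hij; exact ⟨hiGsel, hxTi⟩
    · rintro ⟨h1, h2⟩; exact Finset.mem_biUnion.mpr ⟨j, h1, h2⟩
  have hmemSs : ∀ {x : Fin p} {j : Fin M}, x ∈ G j → j ∉ Gstar → x ∉ Ss := by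
    intro x j hxj hjG hx
    obtain ⟨i, hiG, hxGi⟩ := Finset.mem_biUnion.mp (hGstarcov hx)
    have : j = i := hdis hxj hxGi
    exact hjG (this ▸ hiG)
  have D1 : Ss \ SS = Gstar.biUnion (fun j => (Ss \ SS) ∩ G j) := by
    ext x
    simp only [Finset.mem_biUnion, Finset.mem_inter, Finset.mem_sdiff]
    constructor
    · intro hx
      obtain ⟨j, hj, hxj⟩ := Finset.mem_biUnion.mp (hGstarcov hx.1)
      exact ⟨j, hj, hx, hxj⟩
    · rintro ⟨j, _, hx, _⟩; exact hx
  have D2 : SS \ Ss = Gsel.biUnion (fun j => T j \ Ss) := by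
    ext x
    simp only [Finset.mem_sdiff, Finset.mem_biUnion, hSSdef]
    tauto
  have hpd1 : (Gstar : Set (Fin M)).PairwiseDisjoint (fun j => (Ss \ SS) ∩ G j) := by
    intro i _ j _ hne
    refine Finset.disjoint_left.mpr fun x hxi hxj => hne ?_
    exact hdis (Finset.mem_inter.mp hxi).2 (Finset.mem_inter.mp hxj).2
  have hpd2 : (Gsel : Set (Fin M)).PairwiseDisjoint (fun j => T j \ Ss) := by
    intro i _ j _ hne
    refine Finset.disjoint_left.mpr fun x hxi hxj => hne ?_
    exact hdis (hTsub i (Finset.mem_sdiff.mp hxi).1) (hTsub j (Finset.mem_sdiff.mp hxj).1)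
  rw [D1, Finset.sum_biUnion hpd1, D2, Finset.sum_biUnion hpd2]
  rw [← Finset.sum_inter_add_sum_sdiff Gstar Gsel (fun j => ∑ x ∈ (Ss \ SS) ∩ G j, z x ^ 2),
      ← Finset.sum_inter_add_sum_sdiff Gsel Gstar (fun j => ∑ x ∈ T j \ Ss, z x ^ 2)]
  -- per-group cardinality facts
  have e1 : ∀ j : Fin M, ((Ss ∩ G j) \ T j).card + (Ss ∩ T j).card = (Ss ∩ G j).card := by
    intro j
    have h : (Ss ∩ G j) ∩ T j = Ss ∩ T j := by
      ext x
      simp only [Finset.mem_inter]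
      exact ⟨fun h => ⟨h.1.1, h.2⟩, fun h => ⟨⟨h.1, hTsub j h.2⟩, h.2⟩⟩
    rw [← h, add_comm]
    exact Finset.card_inter_add_card_sdiff _ _
  have e2 : ∀ j : Fin M, (T j \ Ss).card + (Ss ∩ T j).card = k2 := by
    intro j
    rw [add_comm, show Ss ∩ T j = T j ∩ Ss from Finset.inter_comm _ _,
        Finset.card_inter_add_card_sdiff, hTcard j]
  -- squares comparison within a group
  have hsq : ∀ j : Fin M, ∀ a ∈ (Ss ∩ G j) \ T j, ∀ b ∈ T j, z a ^ 2 ≤ z b ^ 2 := by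
    intro j a ha b hb
    have haG : a ∈ G j \ T j := by
      simp only [Finset.mem_sdiff, Finset.mem_inter] at ha ⊢
      exact ⟨ha.1.2, ha.2⟩
    have habs := hTtop j b hb a haG
    calc z a ^ 2 = |z a| ^ 2 := (sq_abs _).symm
      _ ≤ |z b| ^ 2 := pow_le_pow_left₀ (abs_nonneg _) habs 2
      _ = z b ^ 2 := sq_abs _
  have I1 : ∀ j ∈ Gstar ∩ Gsel, (k2 : ℝ) * ∑ x ∈ (Ss \ SS) ∩ G j, z x ^ 2
      ≤ (k2s : ℝ) * ∑ x ∈ T j \ Ss, z x ^ 2 := by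
    intro j hj
    have hjsel : j ∈ Gsel := (Finset.mem_inter.mp hj).2
    have hset : (Ss \ SS) ∩ G j = (Ss ∩ G j) \ T j := by
      ext x
      simp only [Finset.mem_inter, Finset.mem_sdiff]
      constructor
      · rintro ⟨⟨hxs, hxss⟩, hxg⟩
        exact ⟨⟨hxs, hxg⟩, fun hxT => hxss ((hmemSS hxg).mpr ⟨hjsel, hxT⟩)⟩
      · rintro ⟨⟨hxs, hxg⟩, hxT⟩
        exact ⟨⟨hxs, fun hss => hxT ((hmemSS hxg).mp hss).2⟩, hxg⟩
    rw [hset]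
    apply key_sum
    · intro b _; positivity
    · intro a ha b hb
      exact hsq j a ha b (Finset.mem_sdiff.mp hb).1
    · exact card_arith _ _ _ _ _ (by have := e1 j; have := hGstarper j; omega) (e2 j) hk2
  have I2 : ∀ j ∈ Gstar \ Gsel, ∑ x ∈ (Ss \ SS) ∩ G j, z x ^ 2 ≤ ∑ x ∈ T j, z x ^ 2 := by
    intro j hj
    have hjnsel : j ∉ Gsel := (Finset.mem_sdiff.mp hj).2
    have hset : (Ss \ SS) ∩ G j = Ss ∩ G j := by
      ext x
      simp only [Finset.mem_inter, Finset.mem_sdiff]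
      constructor
      · rintro ⟨⟨hxs, _⟩, hxg⟩; exact ⟨hxs, hxg⟩
      · rintro ⟨hxs, hxg⟩
        exact ⟨⟨hxs, fun hss => hjnsel ((hmemSS hxg).mp hss).1⟩, hxg⟩
    rw [hset]
    have split1 : ∑ x ∈ Ss ∩ G j, z x ^ 2
        = ∑ x ∈ Ss ∩ T j, z x ^ 2 + ∑ x ∈ (Ss ∩ G j) \ T j, z x ^ 2 := by
      rw [← Finset.sum_inter_add_sum_sdiff (Ss ∩ G j) (T j) (fun x => z x ^ 2)]
      congr 2
      ext x
      simp only [Finset.mem_inter]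
      exact ⟨fun h => ⟨h.1.1, h.2⟩, fun h => ⟨⟨h.1, hTsub j h.2⟩, h.2⟩⟩
    have split2 : ∑ x ∈ T j, z x ^ 2
        = ∑ x ∈ Ss ∩ T j, z x ^ 2 + ∑ x ∈ T j \ Ss, z x ^ 2 := by
      rw [← Finset.sum_inter_add_sum_sdiff (T j) Ss (fun x => z x ^ 2)]
      congr 2
      exact Finset.inter_comm _ _
    rw [split1, split2]
    have hkey := key_sum ((Ss ∩ G j) \ T j) (T j \ Ss) (fun x => z x ^ 2)
      (fun b _ => by positivity)
      (fun a ha b hb => hsq j a ha b (Finset.mem_sdiff.mp hb).1)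
      1 1 (by have := e1 j; have := e2 j; have := hGstarper j; omega)
    simp only [Nat.cast_one, one_mul] at hkey
    linarith
  -- combine within-Gsel part
  have hk2R : (0 : ℝ) < k2 := by exact_mod_cast hk2pos
  have hk1R : (0 : ℝ) < k1 := by exact_mod_cast hk1pos
  have hX1 : ∑ j ∈ Gstar ∩ Gsel, ∑ x ∈ (Ss \ SS) ∩ G j, z x ^ 2
      ≤ ((k2s : ℝ) / k2) * ∑ j ∈ Gsel ∩ Gstar, ∑ x ∈ T j \ Ss, z x ^ 2 := by
    have hsum := Finset.sum_le_sum I1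
    rw [← Finset.mul_sum, ← Finset.mul_sum] at hsum
    rw [Finset.inter_comm Gsel Gstar, div_mul_eq_mul_div, le_div_iff₀ hk2R]
    linarith
  have hX2 : ∑ j ∈ Gstar \ Gsel, ∑ x ∈ (Ss \ SS) ∩ G j, z x ^ 2
      ≤ ((k1s : ℝ) / k1) * ∑ j ∈ Gsel \ Gstar, ∑ x ∈ T j \ Ss, z x ^ 2 := by
    have step1 : ∑ j ∈ Gstar \ Gsel, ∑ x ∈ (Ss \ SS) ∩ G j, z x ^ 2
        ≤ ∑ j ∈ Gstar \ Gsel, ∑ x ∈ T j, z x ^ 2 := Finset.sum_le_sum I2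
    have step2 : (k1 : ℝ) * ∑ j ∈ Gstar \ Gsel, ∑ x ∈ T j, z x ^ 2
        ≤ (k1s : ℝ) * ∑ j ∈ Gsel \ Gstar, ∑ x ∈ T j, z x ^ 2 := by
      apply key_sum
      · intro b _; positivity
      · intro a ha b hb
        have hnr : ∀ j : Fin M, ∑ x ∈ T j, z x ^ 2 = ‖restrict z (T j)‖ ^ 2 :=
          fun j => (norm_restrict_sq z (T j)).symm
        rw [hnr a, hnr b]
        exact pow_le_pow_left₀ (norm_nonneg _)
          (hsel b (Finset.mem_sdiff.mp hb).1 a (Finset.mem_sdiff.mp ha).2) 2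
      · have c1 : (Gstar \ Gsel).card + (Gstar ∩ Gsel).card = Gstar.card := by
          rw [add_comm]; exact Finset.card_inter_add_card_sdiff _ _
        have c2 : (Gsel \ Gstar).card + (Gstar ∩ Gsel).card = k1 := by
          rw [add_comm, show Gstar ∩ Gsel = Gsel ∩ Gstar from Finset.inter_comm _ _,
              Finset.card_inter_add_card_sdiff, hGsel]
        exact card_arith _ _ _ _ _ (by omega) c2 hk1
    have step3 : ∑ j ∈ Gsel \ Gstar, ∑ x ∈ T j \ Ss, z x ^ 2
        = ∑ j ∈ Gsel \ Gstar, ∑ x ∈ T j, z x ^ 2 := by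
      apply Finset.sum_congr rfl
      intro j hj
      congr 1
      have hd : Disjoint (T j) Ss := Finset.disjoint_left.mpr fun x hx hxs =>
        hmemSs (hTsub j hx) (Finset.mem_sdiff.mp hj).2 hxs
      exact Finset.sdiff_eq_self_of_disjoint hd
    rw [step3, div_mul_eq_mul_div, le_div_iff₀ hk1R]
    have step1' := mul_le_mul_of_nonneg_right step1 hk1R.le
    linarith
  have hY1 : (0 : ℝ) ≤ ∑ j ∈ Gsel ∩ Gstar, ∑ x ∈ T j \ Ss, z x ^ 2 := by positivity
  have hY2 : (0 : ℝ) ≤ ∑ j ∈ Gsel \ Gstar, ∑ x ∈ T j \ Ss, z x ^ 2 := by positivity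
  have hm1 : (k2s : ℝ) / k2 ≤ max ((k1s : ℝ) / k1) ((k2s : ℝ) / k2) := le_max_right _ _
  have hm2 : (k1s : ℝ) / k1 ≤ max ((k1s : ℝ) / k1) ((k2s : ℝ) / k2) := le_max_left _ _
  calc ∑ j ∈ Gstar ∩ Gsel, ∑ x ∈ (Ss \ SS) ∩ G j, z x ^ 2
        + ∑ j ∈ Gstar \ Gsel, ∑ x ∈ (Ss \ SS) ∩ G j, z x ^ 2
      ≤ ((k2s : ℝ) / k2) * ∑ j ∈ Gsel ∩ Gstar, ∑ x ∈ T j \ Ss, z x ^ 2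
        + ((k1s : ℝ) / k1) * ∑ j ∈ Gsel \ Gstar, ∑ x ∈ T j \ Ss, z x ^ 2 :=
        add_le_add hX1 hX2
    _ ≤ max ((k1s : ℝ) / k1) ((k2s : ℝ) / k2) * ∑ j ∈ Gsel ∩ Gstar, ∑ x ∈ T j \ Ss, z x ^ 2
        + max ((k1s : ℝ) / k1) ((k2s : ℝ) / k2) * ∑ j ∈ Gsel \ Gstar, ∑ x ∈ T j \ Ss, z x ^ 2 :=
        add_le_add (mul_le_mul_of_nonneg_right hm1 hY1) (mul_le_mul_of_nonneg_right hm2 hY2)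
    _ = max ((k1s : ℝ) / k1) ((k2s : ℝ) / k2)
        * (∑ j ∈ Gsel ∩ Gstar, ∑ x ∈ T j \ Ss, z x ^ 2
          + ∑ j ∈ Gsel \ Gstar, ∑ x ∈ T j \ Ss, z x ^ 2) := (mul_add _ _ _).symm
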